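/- arXiv:2506.01552 — 13 statements merged into one kernel-verified Lean document; each statement's English description precedes it below -/
import Mathlib

section
/- Let L be a finite nonempty set, let p : L → ℝ satisfy p(l) ≥ 0 for all l and Σ_{l∈L} p(l) = 1, and let Ln ⊆ L with Ln ≠ ∅ and Ln ≠ L. Let Cn, Cπ : L → ℝ satisfy Cn(l) > Cπ(l) for all l ∈ L\Ln and Cn(l) < Cπ(l) for all l ∈ Ln. Set M̄ = max_{l∈L\Ln} (Cn(l) − Cπ(l)) and m = min_{l∈Ln} (Cπ(l) − Cn(l)). If Σ_{l∈Ln} p(l) > M̄ / (M̄ + m), then Σ_{l∈L} p(l)·Cπ(l) > Σ_{l∈L} p(l)·Cn(l), i.e. the expected cost of the parent node strictly exceeds the expected cost of the node. -/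
/-- Part 1 of Lemma 1 (hierarchically reasonable metrics): if the probability of the
node `n` (i.e. `∑ l ∈ Ln, p l`) exceeds `M̄ / (M̄ + m)`, then the expected cost of the
parent strictly exceeds the expected cost of the node. -/
theorem lemma1_part1 {L : Type*} [Fintype L] [Nonempty L]
    (p : L → ℝ) (hp : ∀ l, 0 ≤ p l) (hpsum : ∑ l, p l = 1)
    (Ln : Finset L) (hLn : Ln.Nonempty) (hLn' : Ln ≠ Finset.univ)
    (Cn Cπ : L → ℝ)
    (hout : ∀ l ∉ Ln, Cπ l < Cn l)
    (hin : ∀ l ∈ Ln, Cn l < Cπ l)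
    (Mbar m : ℝ)
    (hMbar : IsGreatest {x : ℝ | ∃ l ∉ Ln, x = Cn l - Cπ l} Mbar)
    (hm : IsLeast {x : ℝ | ∃ l ∈ Ln, x = Cπ l - Cn l} m)
    (hthresh : Mbar / (Mbar + m) < ∑ l ∈ Ln, p l) :
    ∑ l, p l * Cn l < ∑ l, p l * Cπ l := by
  classical
  -- Mbar > 0
  obtain ⟨l₀, hl₀⟩ := hLn
  obtain ⟨l₁, hl₁⟩ : ∃ l, l ∉ Ln := by
    by_contra h
    push_neg at h
    exact hLn' (Finset.eq_univ_iff_forall.mpr h)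
  have hMpos : 0 < Mbar := lt_of_lt_of_le (sub_pos.mpr (hout l₁ hl₁))
    (hMbar.2 ⟨l₁, hl₁, rfl⟩)
  have hmpos : 0 < m := by
    obtain ⟨l, hl, hx⟩ := hm.1
    exact hx ▸ sub_pos.mpr (hin l hl)
  have hMm : 0 < Mbar + m := by linarith
  set q : ℝ := ∑ l ∈ Ln, p l with hq
  have hqkey : Mbar < q * (Mbar + m) := by
    rw [div_lt_iff₀ hMm] at hthresh
    linarith
  -- split the difference sum
  have hsplit : ∑ l, p l * (Cπ l - Cn l) =
      (∑ l ∈ Ln, p l * (Cπ l - Cn l)) + ∑ l ∈ Lnᶜ, p l * (Cπ l - Cn l) :=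
    (Finset.sum_add_sum_compl Ln _).symm
  have h1 : q * m ≤ ∑ l ∈ Ln, p l * (Cπ l - Cn l) := by
    rw [hq, Finset.sum_mul]
    refine Finset.sum_le_sum fun l hl => ?_
    exact mul_le_mul_of_nonneg_left (hm.2 ⟨l, hl, rfl⟩) (hp l)
  have h2 : -((1 - q) * Mbar) ≤ ∑ l ∈ Lnᶜ, p l * (Cπ l - Cn l) := by
    have hcompl : ∑ l ∈ Lnᶜ, p l = 1 - q := by
      have := Finset.sum_add_sum_compl Ln p
      rw [hpsum] at this
      linarith
    calc -((1 - q) * Mbar) = ∑ l ∈ Lnᶜ, p l * (-Mbar) := by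
          rw [← Finset.sum_mul, hcompl]; ring
      _ ≤ ∑ l ∈ Lnᶜ, p l * (Cπ l - Cn l) := by
          refine Finset.sum_le_sum fun l hl => ?_
          have : Cn l - Cπ l ≤ Mbar := hMbar.2 ⟨l, Finset.mem_compl.mp hl, rfl⟩
          exact mul_le_mul_of_nonneg_left (by linarith) (hp l)
  have hpos : 0 < ∑ l, p l * (Cπ l - Cn l) := by
    rw [hsplit]; nlinarith
  have : ∑ l, p l * (Cπ l - Cn l) = (∑ l, p l * Cπ l) - ∑ l, p l * Cn l := by
    rw [← Finset.sum_sub_distrib]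
    exact Finset.sum_congr rfl fun l _ => by ring
  linarith [this ▸ hpos]
end

section
/- Let L be a finite nonempty set, let p : L → ℝ satisfy p(l) ≥ 0 for all l and Σ_{l∈L} p(l) = 1, and let Ln ⊆ L with Ln ≠ ∅ and Ln ≠ L. Let Cn, Cπ : L → ℝ satisfy Cn(l) > Cπ(l) for all l ∈ L\Ln and Cn(l) < Cπ(l) for all l ∈ Ln. Set m̄ = min_{l∈L\Ln} (Cn(l) − Cπ(l)) and M = max_{l∈Ln} (Cπ(l) − Cn(l)). If Σ_{l∈Ln} p(l) < m̄ / (m̄ + M), then Σ_{l∈L} p(l)·Cn(l) > Σ_{l∈L} p(l)·Cπ(l), i.e. the expected cost of the node strictly exceeds the expected cost of the parent node. -/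
/-- Part 2 of Lemma 1 (hierarchically reasonable metrics): if the probability of the
node `n` (i.e. `∑ l ∈ Ln, p l`) is below `m̄ / (m̄ + M)`, then the expected cost of the
node strictly exceeds the expected cost of the parent. -/
theorem lemma1_part2 {L : Type*} [Fintype L] [Nonempty L]
    (p : L → ℝ) (hp : ∀ l, 0 ≤ p l) (hpsum : ∑ l, p l = 1)
    (Ln : Finset L) (hLn : Ln.Nonempty) (hLn' : Ln ≠ Finset.univ)
    (Cn Cπ : L → ℝ)
    (hout : ∀ l ∉ Ln, Cπ l < Cn l)
    (hin : ∀ l ∈ Ln, Cn l < Cπ l)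
    (mbar M : ℝ)
    (hmbar : IsLeast {x : ℝ | ∃ l ∉ Ln, x = Cn l - Cπ l} mbar)
    (hM : IsGreatest {x : ℝ | ∃ l ∈ Ln, x = Cπ l - Cn l} M)
    (hthresh : ∑ l ∈ Ln, p l < mbar / (mbar + M)) :
    ∑ l, p l * Cπ l < ∑ l, p l * Cn l := by
  obtain ⟨⟨l₀, hl₀, hl₀'⟩, hmlb⟩ := hmbar
  obtain ⟨⟨l₁, hl₁, hl₁'⟩, hMub⟩ := hM
  have hmpos : 0 < mbar := by
    rw [hl₀']; linarith [hout l₀ hl₀]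
  have hMpos : 0 < M := by
    rw [hl₁']; linarith [hin l₁ hl₁]
  set q : ℝ := ∑ l ∈ Ln, p l with hq
  classical
  have hqkey : q * (mbar + M) < mbar :=
    (lt_div_iff₀ (by linarith)).mp hthresh
  have hqc : ∑ l ∈ Lnᶜ, p l = 1 - q := by
    have := Finset.sum_add_sum_compl Ln p
    rw [hpsum] at this; linarith
  -- lower bound on complement sum
  have h1 : ∀ l ∈ Lnᶜ, p l * mbar ≤ p l * (Cn l - Cπ l) := by
    intro l hl
    rw [Finset.mem_compl] at hl
    exact mul_le_mul_of_nonneg_left (hmlb ⟨l, hl, rfl⟩) (hp l)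
  have h2 : ∀ l ∈ Ln, p l * (Cπ l - Cn l) ≤ p l * M := by
    intro l hl
    exact mul_le_mul_of_nonneg_left (hMub ⟨l, hl, rfl⟩) (hp l)
  have hA : (1 - q) * mbar ≤ ∑ l ∈ Lnᶜ, p l * (Cn l - Cπ l) := by
    calc (1 - q) * mbar = ∑ l ∈ Lnᶜ, p l * mbar := by
          rw [← Finset.sum_mul, hqc]
      _ ≤ _ := Finset.sum_le_sum h1
  have hB : ∑ l ∈ Ln, p l * (Cπ l - Cn l) ≤ q * M := by
    calc ∑ l ∈ Ln, p l * (Cπ l - Cn l) ≤ ∑ l ∈ Ln, p l * M := Finset.sum_le_sum h2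
      _ = q * M := by rw [← Finset.sum_mul]
  have hsplit : ∑ l, p l * Cn l - ∑ l, p l * Cπ l
      = ∑ l ∈ Lnᶜ, p l * (Cn l - Cπ l) - ∑ l ∈ Ln, p l * (Cπ l - Cn l) := by
    have h3 : ∀ f : L → ℝ, ∑ l, f l = ∑ l ∈ Ln, f l + ∑ l ∈ Lnᶜ, f l :=
      fun f => (Finset.sum_add_sum_compl Ln f).symm
    rw [h3 (fun l => p l * Cn l), h3 (fun l => p l * Cπ l)]
    simp only [Finset.sum_sub_distrib, mul_sub]
    ring
  nlinarith [hA, hB, hqkey]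
end

section
/- Let L be a finite set, let p : L → ℝ satisfy p(l) ≥ 0 for all l and Σ_{l∈L} p(l) = 1, and let Ln ⊆ La ⊆ L with Ln ≠ ∅ and La\Ln ≠ ∅. Let Cn, Cπ : L → ℝ satisfy Cn(l) < Cπ(l) for all l ∈ Ln, Cn(l) > Cπ(l) for all l ∈ La\Ln, and Cn(l) = Cπ(l) for all l ∈ L\La. Set M̃̄ = max_{l∈La\Ln} (Cn(l) − Cπ(l)) and m̃ = min_{l∈Ln} (Cπ(l) − Cn(l)). If Σ_{l∈Ln} p(l) > (M̃̄ / (M̃̄ + m̃)) · Σ_{l∈La} p(l), then Σ_{l∈L} p(l)·Cπ(l) > Σ_{l∈L} p(l)·Cn(l). -/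
/-- Part 1 of the proposition on metrics satisfying the weakened hierarchical
reasonableness conditions (Equations (2) and (4)): if the probability of the node `n`
exceeds `q_max(n) · P(a_n)`, then the expected cost of the parent strictly exceeds the
expected cost of the node. -/
theorem weak_reasonable_part1 {L : Type*} [Fintype L] [DecidableEq L]
    (p : L → ℝ) (hp : ∀ l, 0 ≤ p l) (hpsum : ∑ l, p l = 1)
    (Ln La : Finset L) (hsub : Ln ⊆ La)
    (hLn : Ln.Nonempty) (hdiff : (La \ Ln).Nonempty)
    (Cn Cπ : L → ℝ)
    (hin : ∀ l ∈ Ln, Cn l < Cπ l)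
    (hmid : ∀ l ∈ La \ Ln, Cπ l < Cn l)
    (hout : ∀ l ∉ La, Cn l = Cπ l)
    (Mbar m : ℝ)
    (hMbar : IsGreatest {x : ℝ | ∃ l ∈ La \ Ln, x = Cn l - Cπ l} Mbar)
    (hm : IsLeast {x : ℝ | ∃ l ∈ Ln, x = Cπ l - Cn l} m)
    (hthresh : Mbar / (Mbar + m) * ∑ l ∈ La, p l < ∑ l ∈ Ln, p l) :
    ∑ l, p l * Cn l < ∑ l, p l * Cπ l := by
  -- Positivity of Mbar and m
  obtain ⟨l₀, hl₀, hMeq⟩ := hMbar.1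
  obtain ⟨l₁, hl₁, hmeq⟩ := hm.1
  have hMpos : 0 < Mbar := by
    have := hmid l₀ hl₀; rw [hMeq]; linarith
  have hmpos : 0 < m := by
    have := hin l₁ hl₁; rw [hmeq]; linarith
  have hMm : 0 < Mbar + m := by linarith
  -- Translate hthresh
  have hPn : Mbar * ∑ l ∈ La, p l < (Mbar + m) * ∑ l ∈ Ln, p l := by
    calc Mbar * ∑ l ∈ La, p l
        = (Mbar / (Mbar + m) * ∑ l ∈ La, p l) * (Mbar + m) := by
          field_simp
      _ < (∑ l ∈ Ln, p l) * (Mbar + m) := mul_lt_mul_of_pos_right hthresh hMm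
      _ = (Mbar + m) * ∑ l ∈ Ln, p l := by ring
  -- Reduce to a sum of differences
  rw [show (∑ l, p l * Cπ l) = (∑ l, p l * Cn l) + ∑ l, p l * (Cπ l - Cn l) by
    rw [← Finset.sum_add_distrib]; congr 1; ext l; ring]
  have hrestrict : ∑ l, p l * (Cπ l - Cn l) = ∑ l ∈ La, p l * (Cπ l - Cn l) := by
    symm
    apply Finset.sum_subset (Finset.subset_univ La)
    intro l _ hl
    rw [hout l hl]; ring
  have hsplit : ∑ l ∈ La, p l * (Cπ l - Cn l)
      = (∑ l ∈ La \ Ln, p l * (Cπ l - Cn l)) + ∑ l ∈ Ln, p l * (Cπ l - Cn l) :=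
    (Finset.sum_sdiff hsub).symm
  have h1 : ∑ l ∈ Ln, m * p l ≤ ∑ l ∈ Ln, p l * (Cπ l - Cn l) := by
    apply Finset.sum_le_sum
    intro l hl
    have h := hm.2 ⟨l, hl, rfl⟩
    calc m * p l ≤ (Cπ l - Cn l) * p l :=
          mul_le_mul_of_nonneg_right h (hp l)
      _ = p l * (Cπ l - Cn l) := by ring
  have h2 : ∑ l ∈ La \ Ln, -(Mbar * p l) ≤ ∑ l ∈ La \ Ln, p l * (Cπ l - Cn l) := by
    apply Finset.sum_le_sum
    intro l hl
    have h := hMbar.2 ⟨l, hl, rfl⟩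
    nlinarith [hp l]
  have hPsplit : ∑ l ∈ La, p l
      = (∑ l ∈ La \ Ln, p l) + ∑ l ∈ Ln, p l := (Finset.sum_sdiff hsub).symm
  have hs1 : ∑ l ∈ Ln, m * p l = m * ∑ l ∈ Ln, p l := by
    rw [Finset.mul_sum]
  have hs2 : ∑ l ∈ La \ Ln, -(Mbar * p l) = -(Mbar * ∑ l ∈ La \ Ln, p l) := by
    rw [Finset.mul_sum, Finset.sum_neg_distrib]
  have key : 0 < ∑ l, p l * (Cπ l - Cn l) := by
    rw [hrestrict, hsplit]
    rw [hs1] at h1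
    rw [hs2] at h2
    nlinarith [hPsplit]
  linarith
end

section
/- Let L be a finite set, let p : L → ℝ satisfy p(l) ≥ 0 for all l and Σ_{l∈L} p(l) = 1, and let Ln ⊆ La ⊆ L with Ln ≠ ∅ and La\Ln ≠ ∅. Let Cn, Cπ : L → ℝ satisfy Cn(l) < Cπ(l) for all l ∈ Ln, Cn(l) > Cπ(l) for all l ∈ La\Ln, and Cn(l) = Cπ(l) for all l ∈ L\La. Set m̃̄ = min_{l∈La\Ln} (Cn(l) − Cπ(l)) and M̃ = max_{l∈Ln} (Cπ(l) − Cn(l)). If Σ_{l∈Ln} p(l) < (m̃̄ / (m̃̄ + M̃)) · Σ_{l∈La} p(l), then Σ_{l∈L} p(l)·Cn(l) > Σ_{l∈L} p(l)·Cπ(l). -/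
/-- Part 2 of the proposition on metrics satisfying the weakened hierarchical
reasonableness conditions (Equations (2) and (4)): if the probability of the node `n`
is below `q_min(n) · P(a_n)`, then the expected cost of the node strictly exceeds the
expected cost of the parent. -/
theorem weak_reasonable_part2 {L : Type*} [Fintype L] [DecidableEq L]
    (p : L → ℝ) (hp : ∀ l, 0 ≤ p l) (hpsum : ∑ l, p l = 1)
    (Ln La : Finset L) (hsub : Ln ⊆ La)
    (hLn : Ln.Nonempty) (hdiff : (La \ Ln).Nonempty)
    (Cn Cπ : L → ℝ)
    (hin : ∀ l ∈ Ln, Cn l < Cπ l)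
    (hmid : ∀ l ∈ La \ Ln, Cπ l < Cn l)
    (hout : ∀ l ∉ La, Cn l = Cπ l)
    (mbar M : ℝ)
    (hmbar : IsLeast {x : ℝ | ∃ l ∈ La \ Ln, x = Cn l - Cπ l} mbar)
    (hM : IsGreatest {x : ℝ | ∃ l ∈ Ln, x = Cπ l - Cn l} M)
    (hthresh : ∑ l ∈ Ln, p l < mbar / (mbar + M) * ∑ l ∈ La, p l) :
    ∑ l, p l * Cπ l < ∑ l, p l * Cn l := by
  obtain ⟨l0, hl0, hl0eq⟩ := hmbar.1
  obtain ⟨l1, hl1, hl1eq⟩ := hM.1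
  have hmbar_pos : 0 < mbar := hl0eq ▸ sub_pos.2 (hmid l0 hl0)
  have hM_pos : 0 < M := hl1eq ▸ sub_pos.2 (hin l1 hl1)
  have hsum_pos : 0 < mbar + M := by linarith
  have key : ∑ l, p l * Cn l - ∑ l, p l * Cπ l = ∑ l ∈ La, p l * (Cn l - Cπ l) := by
    rw [← Finset.sum_sub_distrib, ← Finset.sum_subset (Finset.subset_univ La)]
    · exact Finset.sum_congr rfl (fun l _ => by ring)
    · intro l _ hl; rw [hout l hl]; ring
  have hsplit : ∑ l ∈ La \ Ln, p l * (Cn l - Cπ l) + ∑ l ∈ Ln, p l * (Cn l - Cπ l)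
      = ∑ l ∈ La, p l * (Cn l - Cπ l) := Finset.sum_sdiff hsub
  have hpsplit : ∑ l ∈ La \ Ln, p l + ∑ l ∈ Ln, p l = ∑ l ∈ La, p l :=
    Finset.sum_sdiff hsub
  have h1 : mbar * ∑ l ∈ La \ Ln, p l ≤ ∑ l ∈ La \ Ln, p l * (Cn l - Cπ l) := by
    rw [Finset.mul_sum]
    refine Finset.sum_le_sum fun l hl => ?_
    have h := hmbar.2 ⟨l, hl, rfl⟩
    have := hp l
    nlinarith
  have h2 : -(M * ∑ l ∈ Ln, p l) ≤ ∑ l ∈ Ln, p l * (Cn l - Cπ l) := by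
    rw [Finset.mul_sum, ← Finset.sum_neg_distrib]
    refine Finset.sum_le_sum fun l hl => ?_
    have h := hM.2 ⟨l, hl, rfl⟩
    have := hp l
    nlinarith
  have h3 : (∑ l ∈ Ln, p l) * (mbar + M) < mbar * ∑ l ∈ La, p l := by
    rw [div_mul_eq_mul_div] at hthresh
    exact (lt_div_iff₀ hsum_pos).1 hthresh
  nlinarith [h1, h2, h3, key, hsplit, hpsplit]
end

section
/- Let N and L be finite sets, let Lf : N → Finset L assign to each node a set of leaves, let d : N → ℕ satisfy d(n) ≤ dmax for all n ∈ N, and suppose that whenever n ≠ m and d(n) = d(m), the sets Lf(n) and Lf(m) are disjoint. Let p : L → ℝ satisfy p(l) ≥ 0 for all l and Σ_{l∈L} p(l) ≤ 1. Then Σ_{n∈N} Σ_{l∈Lf(n)} p(l) ≤ dmax + 1. -/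
/-- Key counting inequality: the total node probability mass `∑_n P(n)` with
`P(n) = ∑_{l ∈ L(n)} p(l)` is at most `d_max + 1`, since nodes at the same depth have
disjoint leaf-descendant sets. -/
theorem total_node_mass_le {N L : Type*} [Fintype N] [Fintype L]
    (Lf : N → Finset L) (d : N → ℕ) (dmax : ℕ) (hd : ∀ n, d n ≤ dmax)
    (hdisj : ∀ n m : N, n ≠ m → d n = d m → Disjoint (Lf n) (Lf m))
    (p : L → ℝ) (hp : ∀ l, 0 ≤ p l) (hpsum : ∑ l, p l ≤ 1) :
    ∑ n : N, ∑ l ∈ Lf n, p l ≤ (dmax : ℝ) + 1 := by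
  classical
  have key : ∑ n : N, ∑ l ∈ Lf n, p l
      = ∑ k ∈ Finset.range (dmax + 1), ∑ n ∈ Finset.univ.filter (fun n => d n = k),
          ∑ l ∈ Lf n, p l := by
    rw [← Finset.sum_fiberwise_of_maps_to 
      (fun n _ => Finset.mem_range.mpr (Nat.lt_succ_of_le (hd n)))]
  rw [key]
  have h1 : ∀ k, ∑ n ∈ Finset.univ.filter (fun n => d n = k), ∑ l ∈ Lf n, p l ≤ 1 := by
    intro k
    have hdisj' : ((Finset.univ.filter (fun n => d n = k) : Finset N) : Set N).PairwiseDisjoint Lf := by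
      intro a ha b hb hab
      simp only [Finset.coe_filter, Set.mem_setOf_eq] at ha hb
      exact hdisj a b hab (ha.2.trans hb.2.symm)
    rw [← Finset.sum_biUnion hdisj']
    calc ∑ l ∈ (Finset.univ.filter (fun n => d n = k)).biUnion Lf, p l
        ≤ ∑ l : L, p l := Finset.sum_le_sum_of_subset_of_nonneg (Finset.subset_univ _)
          (fun l _ _ => hp l)
      _ ≤ 1 := hpsum
  calc ∑ k ∈ Finset.range (dmax + 1), ∑ n ∈ Finset.univ.filter (fun n => d n = k),
          ∑ l ∈ Lf n, p l
      ≤ ∑ _k ∈ Finset.range (dmax + 1), (1 : ℝ) := Finset.sum_le_sum (fun k _ => h1 k)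
    _ = (dmax : ℝ) + 1 := by simp
end

section
/- Let N and L be finite sets, let Lf : N → Finset L, let d : N → ℕ satisfy d(n) ≤ dmax for all n ∈ N, and suppose that whenever n ≠ m and d(n) = d(m), the sets Lf(n) and Lf(m) are disjoint. Let p : L → ℝ satisfy p(l) ≥ 0 for all l and Σ_{l∈L} p(l) ≤ 1. Let q > 0 and let S ⊆ N be such that Σ_{l∈Lf(n)} p(l) ≥ q for every n ∈ S. Then the cardinality of S satisfies |S| ≤ (dmax + 1)/q. -/
/-- Candidate-set size bound of Theorem 1: if every node of `S` has probability at
least `q > 0`, then `|S| ≤ (d_max + 1)/q`. -/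
theorem candidate_set_card_le {N L : Type*} [Fintype N] [Fintype L]
    (Lf : N → Finset L) (d : N → ℕ) (dmax : ℕ) (hd : ∀ n, d n ≤ dmax)
    (hdisj : ∀ n m : N, n ≠ m → d n = d m → Disjoint (Lf n) (Lf m))
    (p : L → ℝ) (hp : ∀ l, 0 ≤ p l) (hpsum : ∑ l, p l ≤ 1)
    (q : ℝ) (hq : 0 < q)
    (S : Finset N) (hS : ∀ n ∈ S, q ≤ ∑ l ∈ Lf n, p l) :
    (S.card : ℝ) ≤ ((dmax : ℝ) + 1) / q := by
  classical
  rw [le_div_iff₀ hq]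
  have key : ∀ k : ℕ, ∑ n ∈ S.filter (fun n => d n = k), ∑ l ∈ Lf n, p l ≤ 1 := by
    intro k
    have hdisj' : ∀ n ∈ S.filter (fun n => d n = k), ∀ m ∈ S.filter (fun n => d n = k),
        n ≠ m → Disjoint (Lf n) (Lf m) := by
      intro n hn m hm hnm
      simp only [Finset.mem_filter] at hn hm
      exact hdisj n m hnm (hn.2.trans hm.2.symm)
    calc ∑ n ∈ S.filter (fun n => d n = k), ∑ l ∈ Lf n, p l
        = ∑ l ∈ (S.filter (fun n => d n = k)).biUnion Lf, p l :=
          (Finset.sum_biUnion hdisj').symm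
      _ ≤ ∑ l, p l := Finset.sum_le_sum_of_subset_of_nonneg (Finset.subset_univ _)
          (fun l _ _ => hp l)
      _ ≤ 1 := hpsum
  have hqS : (S.card : ℝ) * q ≤ ∑ n ∈ S, ∑ l ∈ Lf n, p l := by
    have := Finset.card_nsmul_le_sum S (fun n => ∑ l ∈ Lf n, p l) q hS
    simpa [nsmul_eq_mul] using this
  have hsplit : ∑ n ∈ S, ∑ l ∈ Lf n, p l
      = ∑ k ∈ Finset.range (dmax + 1), ∑ n ∈ S.filter (fun n => d n = k), ∑ l ∈ Lf n, p l := by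
    rw [← Finset.sum_fiberwise_of_maps_to (fun n hn => Finset.mem_range.mpr
      (Nat.lt_succ_of_le (hd n)))]
  refine hqS.trans ?_
  rw [hsplit]
  calc ∑ k ∈ Finset.range (dmax + 1), ∑ n ∈ S.filter (fun n => d n = k), ∑ l ∈ Lf n, p l
      ≤ ∑ _k ∈ Finset.range (dmax + 1), (1 : ℝ) := Finset.sum_le_sum (fun k _ => key k)
    _ = (dmax : ℝ) + 1 := by simp
end

section
/- Let V be a finite type carrying a rooted tree structure given by a root r ∈ V and a parent map π : V → V with π(r) = r and, for every v ∈ V, some k ∈ ℕ with π^[k](v) = r. Suppose every node with at least one child has at least two children. Call a subset S ⊆ V an antichain if for all u, v ∈ S with u ≠ v, u ∉ A(v) and v ∉ A(u). Then the number of nonempty antichains of V is at least 2^{|V|/2} − 1 (an inequality of real numbers, with real exponent |V|/2). -/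
/-- In a rooted tree where every internal node has at least two children, the number of
nonempty antichains (sets of mutually exclusive nodes) is at least `2^(|V|/2) − 1`. -/
theorem card_antichains_ge {V : Type*} [Fintype V] [DecidableEq V]
    (r : V) (π : V → V) (hr : π r = r) (hroot : ∀ v : V, ∃ k : ℕ, π^[k] v = r)
    (hbranch : ∀ v : V,
      (Finset.univ.filter (fun u => π u = v ∧ u ≠ v)).Nonempty →
      2 ≤ (Finset.univ.filter (fun u => π u = v ∧ u ≠ v)).card) :
    (2 : ℝ) ^ ((Fintype.card V : ℝ) / 2) - 1 ≤
      ({S : Finset V | S.Nonempty ∧ ∀ u ∈ S, ∀ v ∈ S, u ≠ v →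
          (∀ k : ℕ, π^[k] v ≠ u) ∧ (∀ k : ℕ, π^[k] u ≠ v)} : Set (Finset V)).ncard := by
  classical
  set children : V → Finset V := fun v => Finset.univ.filter (fun u => π u = v ∧ u ≠ v)
    with hchildren
  set leaves : Finset V := Finset.univ.filter (fun v => children v = ∅) with hleaves
  set I : Finset V := Finset.univ.filter (fun v => children v ≠ ∅) with hI
  -- if u is a leaf and π^[k] v = u then v = u
  have hleaf_anc : ∀ u ∈ leaves, ∀ k : ℕ, ∀ v : V, π^[k] v = u → v = u := by
    intro u hu k
    induction k with
    | zero => intro v hv; simpa using hv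
    | succ k ih =>
      intro v hv
      rw [Function.iterate_succ_apply'] at hv
      by_cases h : π^[k] v = u
      · exact ih v h
      · exfalso
        have hm : π^[k] v ∈ children u := by
          simp [hchildren, Finset.mem_filter, hv, h]
        rw [hleaves, Finset.mem_filter] at hu
        rw [hu.2] at hm
        exact absurd hm (Finset.notMem_empty _)
  -- children sets are pairwise disjoint
  have hdisj : ∀ v ∈ I, ∀ w ∈ I, v ≠ w → Disjoint (children v) (children w) := by
    intro v _ w _ hvw
    refine Finset.disjoint_left.mpr ?_
    intro a hav haw
    simp only [hchildren, Finset.mem_filter] at hav haw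
    exact hvw (hav.2.1 ▸ haw.2.1)
  have hsum : 2 * I.card ≤ (I.biUnion children).card := by
    rw [Finset.card_biUnion hdisj]
    calc 2 * I.card = ∑ _v ∈ I, 2 := by rw [Finset.sum_const, smul_eq_mul, mul_comm]
    _ ≤ ∑ v ∈ I, (children v).card := by
        apply Finset.sum_le_sum
        intro v hv
        rw [hI, Finset.mem_filter] at hv
        exact hbranch v (Finset.nonempty_iff_ne_empty.mpr hv.2)
  have hrnot : r ∉ I.biUnion children := by
    intro hmem
    rcases Finset.mem_biUnion.mp hmem with ⟨v, _, hrv⟩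
    simp only [hchildren, Finset.mem_filter] at hrv
    exact hrv.2.2 (hr.symm.trans hrv.2.1)
  have hcard1 : (I.biUnion children).card ≤ Fintype.card V - 1 := by
    have : I.biUnion children ⊆ Finset.univ.erase r :=
      fun a ha => Finset.mem_erase.mpr ⟨fun h => hrnot (h ▸ ha), Finset.mem_univ a⟩
    calc (I.biUnion children).card ≤ (Finset.univ.erase r).card := Finset.card_le_card this
    _ = Fintype.card V - 1 := by rw [Finset.card_erase_of_mem (Finset.mem_univ r)]; rfl
  have hpos : 1 ≤ Fintype.card V := Fintype.card_pos_iff.mpr ⟨r⟩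
  have hIL : leaves.card + I.card = Fintype.card V := by
    rw [hleaves, hI]
    simpa using Finset.card_filter_add_card_filter_not
      (s := (Finset.univ : Finset V)) (p := fun v => children v = ∅)
  have hL : Fintype.card V ≤ 2 * leaves.card := by omega
  -- the candidate antichains: nonempty subsets of leaves
  set F : Finset (Finset V) := leaves.powerset.erase ∅ with hF
  have hFcard : F.card = 2 ^ leaves.card - 1 := by
    rw [hF, Finset.card_erase_of_mem (Finset.mem_powerset.mpr (Finset.empty_subset _)),
      Finset.card_powerset]
  have hsub : (↑F : Set (Finset V)) ⊆
      {S : Finset V | S.Nonempty ∧ ∀ u ∈ S, ∀ v ∈ S, u ≠ v →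
        (∀ k : ℕ, π^[k] v ≠ u) ∧ (∀ k : ℕ, π^[k] u ≠ v)} := by
    intro S hS
    simp only [hF, Finset.coe_erase, Set.mem_diff, Finset.mem_coe, Finset.mem_powerset,
      Set.mem_singleton_iff] at hS
    obtain ⟨hSl, hSne⟩ := hS
    refine ⟨Finset.nonempty_iff_ne_empty.mpr hSne, fun u hu v hv huv => ?_⟩
    have hul : u ∈ leaves := hSl hu
    have hvl : v ∈ leaves := hSl hv
    constructor
    · intro k h
      exact huv (hleaf_anc u hul k v h).symm
    · intro k h
      exact huv (hleaf_anc v hvl k u h)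
  have hmono : (F.card : ℝ) ≤
      (({S : Finset V | S.Nonempty ∧ ∀ u ∈ S, ∀ v ∈ S, u ≠ v →
        (∀ k : ℕ, π^[k] v ≠ u) ∧ (∀ k : ℕ, π^[k] u ≠ v)} : Set (Finset V)).ncard : ℝ) := by
    have := Set.ncard_le_ncard hsub (Set.toFinite _)
    rw [Set.ncard_coe_finset] at this
    exact_mod_cast this
  refine le_trans ?_ hmono
  rw [hFcard]
  have h1 : (2:ℝ) ^ ((Fintype.card V : ℝ) / 2) ≤ (2:ℝ) ^ (leaves.card : ℝ) := by
    apply Real.rpow_le_rpow_of_exponent_le one_le_two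
    have : (Fintype.card V : ℝ) ≤ 2 * leaves.card := by exact_mod_cast hL
    linarith
  have h2 : (2:ℝ) ^ (leaves.card : ℝ) = ((2 ^ leaves.card : ℕ) : ℝ) := by
    rw [Real.rpow_natCast]; push_cast; ring
  have h3 : ((2 ^ leaves.card - 1 : ℕ) : ℝ) = ((2 ^ leaves.card : ℕ) : ℝ) - 1 := by
    have : 1 ≤ 2 ^ leaves.card := Nat.one_le_two_pow
    push_cast [this]; ring
  rw [h3]
  linarith [h1, h2.ge, h2.le]
end

section
/- Let N be a finite type, L a finite nonempty set, A : L → Finset N with a fixed element r ∈ N satisfying r ∈ A(l) for every l ∈ L, d : L → ℕ with d(l) ≤ dmax for all l ∈ L, β > 0, and p : L → ℝ with p(l) ≥ 0 for all l and Σ_{l∈L} p(l) = 1. Define U(h) = Σ_{l∈L} p(l)·(1+β²)·|h ∩ A(l)| / (|h| + β²·(d(l)+1)) for finite h ⊆ N. Then U({r}) ≥ (1+β²)/(1 + β²·(dmax+1)) > 0 = U(∅). In particular any maximizer of U over finite subsets of N is nonempty and has utility at least (1+β²)/(1+β²(dmax+1)). -/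
/-- Expected `hF_β` utility of a prediction `h` (a finite set of nodes equal to its own
ancestor-augmentation) under the leaf distribution `p`. -/
noncomputable def expUtility {N L : Type*} [Fintype L] [DecidableEq N]
    (A : L → Finset N) (d : L → ℕ) (β : ℝ) (p : L → ℝ) (h : Finset N) : ℝ :=
  ∑ l, p l * ((1 + β ^ 2) * ((h ∩ A l).card : ℝ) /
    ((h.card : ℝ) + β ^ 2 * ((d l : ℝ) + 1)))

/-- The expected `hF_β` utility of predicting the root alone is at least
`(1+β²)/(1+β²(d_max+1)) > 0 = U(∅)`; in particular any maximizer of the expected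
utility is nonempty, with utility at least this bound. -/
theorem root_utility_lower_bound {N L : Type*} [Fintype N] [DecidableEq N]
    [Fintype L] [Nonempty L]
    (A : L → Finset N) (r : N) (hr : ∀ l, r ∈ A l)
    (d : L → ℕ) (dmax : ℕ) (hd : ∀ l, d l ≤ dmax)
    (β : ℝ) (hβ : 0 < β)
    (p : L → ℝ) (hp : ∀ l, 0 ≤ p l) (hpsum : ∑ l, p l = 1) :
    (1 + β ^ 2) / (1 + β ^ 2 * ((dmax : ℝ) + 1)) ≤ expUtility A d β p {r} ∧
    0 < (1 + β ^ 2) / (1 + β ^ 2 * ((dmax : ℝ) + 1)) ∧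
    expUtility A d β p ∅ = 0 ∧
    ∀ h : Finset N, (∀ h' : Finset N, expUtility A d β p h' ≤ expUtility A d β p h) →
      h.Nonempty ∧
      (1 + β ^ 2) / (1 + β ^ 2 * ((dmax : ℝ) + 1)) ≤ expUtility A d β p h := by
  have hβ2 : (0:ℝ) < β ^ 2 := by positivity
  have hpos : (0:ℝ) < (1 + β ^ 2) / (1 + β ^ 2 * ((dmax : ℝ) + 1)) := by positivity
  have hroot : (1 + β ^ 2) / (1 + β ^ 2 * ((dmax : ℝ) + 1)) ≤ expUtility A d β p {r} := by
    have key : ∀ l, p l * ((1 + β ^ 2) / (1 + β ^ 2 * ((dmax : ℝ) + 1))) ≤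
        p l * ((1 + β ^ 2) * ((({r} : Finset N) ∩ A l).card : ℝ) /
          ((({r} : Finset N).card : ℝ) + β ^ 2 * ((d l : ℝ) + 1))) := by
      intro l
      have hcap : ({r} : Finset N) ∩ A l = {r} := by
        ext x; simp [Finset.mem_inter]; rintro rfl; exact hr l
      rw [hcap]
      simp only [Finset.card_singleton, Nat.cast_one, mul_one]
      apply mul_le_mul_of_nonneg_left _ (hp l)
      apply div_le_div_of_nonneg_left (by positivity) (by positivity)
      have : (d l : ℝ) ≤ (dmax : ℝ) := Nat.cast_le.2 (hd l)
      nlinarith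
    calc (1 + β ^ 2) / (1 + β ^ 2 * ((dmax : ℝ) + 1))
        = ∑ l, p l * ((1 + β ^ 2) / (1 + β ^ 2 * ((dmax : ℝ) + 1))) := by
          rw [← Finset.sum_mul, hpsum, one_mul]
      _ ≤ expUtility A d β p {r} := Finset.sum_le_sum fun l _ => key l
  have hempty : expUtility A d β p ∅ = 0 := by
    simp [expUtility]
  refine ⟨hroot, hpos, hempty, fun h hmax => ?_⟩
  have hle : (1 + β ^ 2) / (1 + β ^ 2 * ((dmax : ℝ) + 1)) ≤ expUtility A d β p h :=
    le_trans hroot (hmax {r})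
  refine ⟨?_, hle⟩
  rcases h.eq_empty_or_nonempty with rfl | hne
  · rw [hempty] at hle; linarith
  · exact hne
end

section
/- Let N be a finite type, L a finite set, A : L → Finset N, d : L → ℕ with dmin ≤ d(l) ≤ D for all l ∈ L, β > 0, and p : L → ℝ with p(l) ≥ 0 for all l. Define U(h) = Σ_{l∈L} p(l)·(1+β²)·|h ∩ A(l)| / (|h| + β²·(d(l)+1)) for finite h ⊆ N, and for n ∈ N set P(n) = Σ_{l∈L, n∈A(l)} p(l). Then for any finite h ⊆ N and any n ∈ N with n ∉ h: U(h ∪ {n}) − U(h) ≤ (1+β²)·P(n)/(|h| + 1 + β²·(dmin+1)) − U(h)/(|h| + 1 + β²·(D+1)). -/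
/-- Per-leaf inequality used in `utility_difference_bound`. -/
lemma key_ineq (β c b bm bD p s i : ℝ)
    (hc : 0 ≤ c) (hbm : 0 < bm) (hbmb : bm ≤ b) (hbd : b ≤ bD)
    (hp : 0 ≤ p) (hs : 0 ≤ s) (hi : 0 ≤ i) :
    p * ((1 + β ^ 2) * (s + i) / (c + 1 + b)) - p * ((1 + β ^ 2) * s / (c + b)) ≤
      (1 + β ^ 2) * (p * i) / (c + 1 + bm) -
        p * ((1 + β ^ 2) * s / (c + b)) / (c + 1 + bD) := by
  have hb : 0 < b := lt_of_lt_of_le hbm hbmb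
  have h1 : 0 < c + b := by linarith
  have h2 : 0 < c + 1 + b := by linarith
  have h3 : 0 < c + 1 + bm := by linarith
  have h4 : 0 < c + 1 + bD := by linarith
  have hβ2 : 0 ≤ 1 + β ^ 2 := by positivity
  have key : p * ((1 + β ^ 2) * (s + i) / (c + 1 + b)) - p * ((1 + β ^ 2) * s / (c + b))
      = (1 + β ^ 2) * (p * i) / (c + 1 + b)
        - (p * ((1 + β ^ 2) * s / (c + b))) / (c + 1 + b) := by
    field_simp
    ring
  rw [key]
  have hA : (1 + β ^ 2) * (p * i) / (c + 1 + b) ≤ (1 + β ^ 2) * (p * i) / (c + 1 + bm) := by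
    gcongr
  have hq : 0 ≤ p * ((1 + β ^ 2) * s / (c + b)) := by positivity
  have hB : p * ((1 + β ^ 2) * s / (c + b)) / (c + 1 + bD) ≤
      p * ((1 + β ^ 2) * s / (c + b)) / (c + 1 + b) := by
    gcongr
  linarith

/-- Key utility-difference inequality in the proof of Lemma 2 on `hF_β` scores:
adding a node `n ∉ h` changes the expected utility by at most
`(1+β²)·P(n)/(|h|+1+β²(d_min+1)) − U(h)/(|h|+1+β²(D+1))`. -/
theorem utility_difference_bound {N L : Type*} [Fintype N] [DecidableEq N] [Fintype L]
    (A : L → Finset N) (d : L → ℕ) (dmin D : ℕ)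
    (hd : ∀ l, dmin ≤ d l ∧ d l ≤ D)
    (β : ℝ) (hβ : 0 < β)
    (p : L → ℝ) (hp : ∀ l, 0 ≤ p l)
    (h : Finset N) (n : N) (hn : n ∉ h) :
    expUtility A d β p (insert n h) - expUtility A d β p h ≤
      (1 + β ^ 2) * (∑ l ∈ Finset.univ.filter (fun l => n ∈ A l), p l) /
          ((h.card : ℝ) + 1 + β ^ 2 * ((dmin : ℝ) + 1)) -
        expUtility A d β p h / ((h.card : ℝ) + 1 + β ^ 2 * ((D : ℝ) + 1)) := by
  classical
  have hcard : ((insert n h).card : ℝ) = (h.card : ℝ) + 1 := by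
    rw [Finset.card_insert_of_notMem hn]; push_cast; ring
  have hfilter : (∑ l ∈ Finset.univ.filter (fun l => n ∈ A l), p l)
      = ∑ l : L, (if n ∈ A l then p l else 0) := by
    rw [Finset.sum_filter]
  rw [hfilter]
  unfold expUtility
  rw [hcard, ← Finset.sum_sub_distrib, Finset.mul_sum, Finset.sum_div, Finset.sum_div,
    ← Finset.sum_sub_distrib]
  apply Finset.sum_le_sum
  intro l _
  have hint : ((insert n h ∩ A l).card : ℝ)
      = ((h ∩ A l).card : ℝ) + (if n ∈ A l then (1:ℝ) else 0) := by
    by_cases hnA : n ∈ A l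
    · rw [Finset.insert_inter_of_mem hnA, Finset.card_insert_of_notMem (by
        simp [hn])]
      push_cast; simp [hnA]
    · rw [Finset.insert_inter_of_notMem hnA]; simp [hnA]
  rw [hint]
  have hmul : (1 + β ^ 2) * (if n ∈ A l then p l else 0)
      = (1 + β ^ 2) * (p l * (if n ∈ A l then (1:ℝ) else 0)) := by
    by_cases hnA : n ∈ A l <;> simp [hnA]
  rw [hmul]
  apply key_ineq
  · exact Nat.cast_nonneg _
  · positivity
  · have := (hd l).1
    have : (dmin : ℝ) ≤ (d l : ℝ) := by exact_mod_cast this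
    nlinarith [sq_nonneg β, hβ]
  · have := (hd l).2
    have : (d l : ℝ) ≤ (D : ℝ) := by exact_mod_cast this
    nlinarith [sq_nonneg β, hβ]
  · exact hp l
  · exact Nat.cast_nonneg _
  · by_cases hnA : n ∈ A l <;> simp [hnA]
end

section
/- Let N be a finite type, L a finite set, A : L → Finset N, d : L → ℕ with dmin ≤ d(l) ≤ D for all l ∈ L, β > 0, and p : L → ℝ with p(l) ≥ 0 for all l. Define U(h) = Σ_{l∈L} p(l)·(1+β²)·|h ∩ A(l)| / (|h| + β²·(d(l)+1)) for finite h ⊆ N, and for n ∈ N set P(n) = Σ_{l∈L, n∈A(l)} p(l). Let h ⊆ N be finite and n ∈ N with n ∉ h. If P(n) < 1/(1 + β²·(D+1)) and U(h) ≥ (1+β²)/(1 + β²·(dmin+1)), then U(h ∪ {n}) < U(h): adding the low-probability node n strictly decreases the expected hF_β utility. -/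
set_option maxHeartbeats 1000000 in
/-- Core of Lemma 2 on `hF_β` scores: adding a node of probability below the threshold
`1/(1+β²(D+1))` to a prediction whose utility is at least `(1+β²)/(1+β²(d_min+1))`
strictly decreases the expected `hF_β` utility. -/
theorem add_low_prob_node_decreases_utility {N L : Type*}
    [Fintype N] [DecidableEq N] [Fintype L]
    (A : L → Finset N) (d : L → ℕ) (dmin D : ℕ)
    (hd : ∀ l, dmin ≤ d l ∧ d l ≤ D)
    (β : ℝ) (hβ : 0 < β)
    (p : L → ℝ) (hp : ∀ l, 0 ≤ p l)
    (h : Finset N) (n : N) (hn : n ∉ h)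
    (hPn : ∑ l ∈ Finset.univ.filter (fun l => n ∈ A l), p l <
      1 / (1 + β ^ 2 * ((D : ℝ) + 1)))
    (hU : (1 + β ^ 2) / (1 + β ^ 2 * ((dmin : ℝ) + 1)) ≤ expUtility A d β p h) :
    expUtility A d β p (insert n h) < expUtility A d β p h := by
  classical
  have hβ2 : (0:ℝ) < β ^ 2 := by positivity
  set s : ℝ := (h.card : ℝ) with hs
  have hs0 : (0:ℝ) ≤ s := Nat.cast_nonneg _
  have ha0 : (0:ℝ) < 1 + β ^ 2 * ((dmin : ℝ) + 1) := by positivity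
  have hb0 : (0:ℝ) < 1 + β ^ 2 * ((D : ℝ) + 1) := by positivity
  have haw : ∀ l, 1 + β ^ 2 * ((dmin : ℝ) + 1) ≤ 1 + β ^ 2 * ((d l : ℝ) + 1) := by
    intro l
    have h1 : (dmin : ℝ) ≤ (d l : ℝ) := by exact_mod_cast (hd l).1
    nlinarith
  have hwb : ∀ l, 1 + β ^ 2 * ((d l : ℝ) + 1) ≤ 1 + β ^ 2 * ((D : ℝ) + 1) := by
    intro l
    have h1 : (d l : ℝ) ≤ (D : ℝ) := by exact_mod_cast (hd l).2
    nlinarith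
  cases isEmpty_or_nonempty L with
  | inl hL =>
    exfalso
    have h0 : expUtility A d β p h = 0 := by simp [expUtility]
    rw [h0] at hU
    have : (0:ℝ) < (1 + β ^ 2) / (1 + β ^ 2 * ((dmin : ℝ) + 1)) := by positivity
    linarith
  | inr hL =>
    have hab : 1 + β ^ 2 * ((dmin : ℝ) + 1) ≤ 1 + β ^ 2 * ((D : ℝ) + 1) := by
      obtain ⟨l0⟩ := hL
      exact (haw l0).trans (hwb l0)
    -- abbreviations for cards
    have hins_card : ((insert n h).card : ℝ) = s + 1 := by
      rw [Finset.card_insert_of_notMem hn]; push_cast [hs]; ring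
    have hins_int : ∀ l, (((insert n h) ∩ A l).card : ℝ)
        = ((h ∩ A l).card : ℝ) + (if n ∈ A l then (1:ℝ) else 0) := by
      intro l
      by_cases hnl : n ∈ A l
      · rw [Finset.insert_inter_of_mem hnl,
          Finset.card_insert_of_notMem (by simp [hn])]
        simp [hnl]
      · rw [Finset.insert_inter_of_notMem hnl]
        simp [hnl]
    -- denominators positive
    have hd1 : ∀ l, (0:ℝ) < s + β ^ 2 * ((d l : ℝ) + 1) := fun l => by positivity
    have hd2 : ∀ l, (0:ℝ) < s + 1 + β ^ 2 * ((d l : ℝ) + 1) := fun l => by positivity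
    -- the key decomposition
    have key : expUtility A d β p (insert n h)
        = expUtility A d β p h
          + (∑ l, p l * ((1 + β ^ 2) * (if n ∈ A l then (1:ℝ) else 0)
              / (s + 1 + β ^ 2 * ((d l : ℝ) + 1))))
          - (∑ l, p l * ((1 + β ^ 2) * ((h ∩ A l).card : ℝ)
              / ((s + β ^ 2 * ((d l : ℝ) + 1)) * (s + 1 + β ^ 2 * ((d l : ℝ) + 1))))) := by
      unfold expUtility
      rw [← Finset.sum_add_distrib, ← Finset.sum_sub_distrib]
      apply Finset.sum_congr rfl
      intro l _
      rw [hins_int l, hins_card]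
      have e1 : s + β ^ 2 * ((d l : ℝ) + 1) ≠ 0 := ne_of_gt (hd1 l)
      have e2 : s + 1 + β ^ 2 * ((d l : ℝ) + 1) ≠ 0 := ne_of_gt (hd2 l)
      rw [hs]
      by_cases hnl : n ∈ A l <;> simp only [hnl, if_true, if_false] <;>
        field_simp <;> ring
    rw [key]
    have goal2 : (∑ l, p l * ((1 + β ^ 2) * (if n ∈ A l then (1:ℝ) else 0)
          / (s + 1 + β ^ 2 * ((d l : ℝ) + 1))))
        < (∑ l, p l * ((1 + β ^ 2) * ((h ∩ A l).card : ℝ)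
          / ((s + β ^ 2 * ((d l : ℝ) + 1)) * (s + 1 + β ^ 2 * ((d l : ℝ) + 1))))) := by
      -- bound the first sum
      have hT1 : (∑ l, p l * ((1 + β ^ 2) * (if n ∈ A l then (1:ℝ) else 0)
            / (s + 1 + β ^ 2 * ((d l : ℝ) + 1))))
          ≤ ((1 + β ^ 2) / (s + (1 + β ^ 2 * ((dmin : ℝ) + 1))))
            * ∑ l ∈ Finset.univ.filter (fun l => n ∈ A l), p l := by
        rw [Finset.mul_sum]
        rw [show (∑ l, p l * ((1 + β ^ 2) * (if n ∈ A l then (1:ℝ) else 0)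
            / (s + 1 + β ^ 2 * ((d l : ℝ) + 1))))
          = ∑ l, (if n ∈ A l then
              p l * ((1 + β ^ 2) / (s + 1 + β ^ 2 * ((d l : ℝ) + 1))) else 0) from
          Finset.sum_congr rfl fun l _ => by by_cases hnl : n ∈ A l <;> simp [hnl]]
        rw [← Finset.sum_filter]
        apply Finset.sum_le_sum
        intro l _
        rw [mul_comm ((1 + β ^ 2) / (s + (1 + β ^ 2 * ((dmin : ℝ) + 1)))) (p l)]
        apply mul_le_mul_of_nonneg_left _ (hp l)
        apply div_le_div_of_nonneg_left (by positivity) (by positivity)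
        have := haw l; linarith
      -- bound the second sum
      have hT2 : (1 / (s + (1 + β ^ 2 * ((D : ℝ) + 1)))) * expUtility A d β p h
          ≤ (∑ l, p l * ((1 + β ^ 2) * ((h ∩ A l).card : ℝ)
            / ((s + β ^ 2 * ((d l : ℝ) + 1)) * (s + 1 + β ^ 2 * ((d l : ℝ) + 1))))) := by
        unfold expUtility
        rw [Finset.mul_sum]
        apply Finset.sum_le_sum
        intro l _
        have hc0 : (0:ℝ) ≤ ((h ∩ A l).card : ℝ) := Nat.cast_nonneg _
        rw [← hs]
        rw [show (1 / (s + (1 + β ^ 2 * ((D : ℝ) + 1))))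
              * (p l * ((1 + β ^ 2) * ((h ∩ A l).card : ℝ)
                / (s + β ^ 2 * ((d l : ℝ) + 1))))
            = p l * ((1 + β ^ 2) * ((h ∩ A l).card : ℝ)
                / ((s + β ^ 2 * ((d l : ℝ) + 1)) * (s + (1 + β ^ 2 * ((D : ℝ) + 1)))))
          from by rw [div_mul_eq_div_div_swap]; ring]
        apply mul_le_mul_of_nonneg_left _ (hp l)
        apply div_le_div_of_nonneg_left (by positivity) (by positivity)
        have h1 := hwb l
        have h2 := hd1 l
        nlinarith
      -- middle chain
      have hmid1 : ((1 + β ^ 2) / (s + (1 + β ^ 2 * ((dmin : ℝ) + 1))))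
            * ∑ l ∈ Finset.univ.filter (fun l => n ∈ A l), p l
          < ((1 + β ^ 2) / (s + (1 + β ^ 2 * ((dmin : ℝ) + 1))))
            * (1 / (1 + β ^ 2 * ((D : ℝ) + 1))) :=
        mul_lt_mul_of_pos_left hPn (by positivity)
      have hmid2 : ((1 + β ^ 2) / (s + (1 + β ^ 2 * ((dmin : ℝ) + 1))))
            * (1 / (1 + β ^ 2 * ((D : ℝ) + 1)))
          ≤ (1 / (s + (1 + β ^ 2 * ((D : ℝ) + 1))))
            * ((1 + β ^ 2) / (1 + β ^ 2 * ((dmin : ℝ) + 1))) := by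
        rw [div_mul_div_comm, div_mul_div_comm, mul_one, one_mul]
        rw [div_le_div_iff₀ (by positivity) (by positivity)]
        apply mul_le_mul_of_nonneg_left _ (by positivity : (0:ℝ) ≤ 1 + β ^ 2)
        nlinarith [mul_le_mul_of_nonneg_left hab hs0]
      have hmid3 : (1 / (s + (1 + β ^ 2 * ((D : ℝ) + 1))))
            * ((1 + β ^ 2) / (1 + β ^ 2 * ((dmin : ℝ) + 1)))
          ≤ (1 / (s + (1 + β ^ 2 * ((D : ℝ) + 1)))) * expUtility A d β p h :=
        mul_le_mul_of_nonneg_left hU (by positivity)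
      calc (∑ l, p l * ((1 + β ^ 2) * (if n ∈ A l then (1:ℝ) else 0)
            / (s + 1 + β ^ 2 * ((d l : ℝ) + 1))))
          ≤ _ := hT1
        _ < _ := hmid1
        _ ≤ _ := hmid2
        _ ≤ _ := hmid3
        _ ≤ _ := hT2
    linarith
end

section
/- Let N and L be finite sets, let Lf : N → Finset L, let d : N → ℕ satisfy d(n) ≤ dmax for all n ∈ N, and suppose that whenever n ≠ m and d(n) = d(m), the sets Lf(n) and Lf(m) are disjoint. Let p : L → ℝ satisfy p(l) ≥ 0 for all l and Σ_{l∈L} p(l) = 1, and let β > 0. If S ⊆ N is such that Σ_{l∈Lf(n)} p(l) ≥ 1/(1 + β²·(dmax+1)) for every n ∈ S, then |S| ≤ (1 + β²·(dmax+1))·(dmax + 1). -/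
/-- Cardinality bound on the candidate set `Q(p)` underlying Theorem 2 on `hF_β`
decoding: if every node of `S` has probability at least `1/(1+β²(d_max+1))`, then
`|S| ≤ (1+β²(d_max+1))·(d_max+1)`. -/
theorem hFbeta_candidate_set_card_le {N L : Type*} [Fintype N] [Fintype L]
    (Lf : N → Finset L) (d : N → ℕ) (dmax : ℕ) (hd : ∀ n, d n ≤ dmax)
    (hdisj : ∀ n m : N, n ≠ m → d n = d m → Disjoint (Lf n) (Lf m))
    (p : L → ℝ) (hp : ∀ l, 0 ≤ p l) (hpsum : ∑ l, p l = 1)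
    (β : ℝ) (hβ : 0 < β)
    (S : Finset N)
    (hS : ∀ n ∈ S, 1 / (1 + β ^ 2 * ((dmax : ℝ) + 1)) ≤ ∑ l ∈ Lf n, p l) :
    (S.card : ℝ) ≤ (1 + β ^ 2 * ((dmax : ℝ) + 1)) * ((dmax : ℝ) + 1) := by
  classical
  set c : ℝ := 1 + β ^ 2 * ((dmax : ℝ) + 1) with hc
  have hc0 : 0 < c := by positivity
  -- bound on each depth slice
  have hslice : ∀ k, ((S.filter (fun n => d n = k)).card : ℝ) ≤ c := by
    intro k
    set T := S.filter (fun n => d n = k) with hT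
    have hdisjT : (T : Set N).PairwiseDisjoint Lf := by
      intro a ha b hb hab
      have hda : d a = k := (Finset.mem_filter.mp ha).2
      have hdb : d b = k := (Finset.mem_filter.mp hb).2
      exact hdisj a b hab (hda.trans hdb.symm)
    have hsum1 : ∑ n ∈ T, ∑ l ∈ Lf n, p l ≤ 1 := by
      rw [← Finset.sum_biUnion hdisjT]
      rw [← hpsum]
      exact Finset.sum_le_sum_of_subset_of_nonneg (Finset.subset_univ _)
        (fun l _ _ => hp l)
    have hlow : (T.card : ℝ) * (1 / c) ≤ ∑ n ∈ T, ∑ l ∈ Lf n, p l := by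
      calc (T.card : ℝ) * (1 / c) = ∑ _n ∈ T, 1 / c := by
            rw [Finset.sum_const, nsmul_eq_mul]
        _ ≤ _ := Finset.sum_le_sum (fun n hn =>
            hS n (Finset.mem_filter.mp hn).1)
    have := hlow.trans hsum1
    calc (T.card : ℝ) = (T.card : ℝ) * (1 / c) * c := by
          field_simp
      _ ≤ 1 * c := by nlinarith
      _ = c := one_mul c
  -- S is covered by depth slices
  have hcover : S = (Finset.range (dmax + 1)).biUnion
      (fun k => S.filter (fun n => d n = k)) := by
    ext n
    simp only [Finset.mem_biUnion, Finset.mem_range, Finset.mem_filter]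
    constructor
    · intro hn; exact ⟨d n, Nat.lt_succ_of_le (hd n), hn, rfl⟩
    · rintro ⟨k, _, hn, _⟩; exact hn
  have hcard : (S.card : ℝ) ≤ ∑ k ∈ Finset.range (dmax + 1),
      ((S.filter (fun n => d n = k)).card : ℝ) := by
    have h : S.card ≤ ∑ k ∈ Finset.range (dmax + 1),
        (S.filter (fun n => d n = k)).card := by
      calc S.card = ((Finset.range (dmax + 1)).biUnion
            (fun k => S.filter (fun n => d n = k))).card := by rw [← hcover]
        _ ≤ _ := Finset.card_biUnion_le
    exact_mod_cast h
  calc (S.card : ℝ) ≤ ∑ k ∈ Finset.range (dmax + 1),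
        ((S.filter (fun n => d n = k)).card : ℝ) := hcard
    _ ≤ ∑ _k ∈ Finset.range (dmax + 1), c :=
        Finset.sum_le_sum (fun k _ => hslice k)
    _ = c * ((dmax : ℝ) + 1) := by
        rw [Finset.sum_const, Finset.card_range, nsmul_eq_mul]
        push_cast; ring
end

section
/- Let (N, ≤) be a finite partially ordered set and for S ⊆ N let aug(S) = {m ∈ N : ∃ n ∈ S, n ≤ m}. Let L be a finite set, A : L → Finset N, d : L → ℕ, β > 0, and p : L → ℝ with p(l) ≥ 0 for all l. Define f(S) = Σ_{l∈L} p(l)·(1+β²)·|aug(S) ∩ A(l)| / (|aug(S)| + β²·(d(l)+1)) for S ⊆ N (with f(∅) = 0). Then the maximum of f over all subsets S ⊆ N equals the maximum of f over all antichains of N (subsets whose distinct elements are pairwise incomparable). -/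
/-- Expected `hF_β` utility of a prediction `S ⊆ N`, which depends on `S` only through
its ancestor-augmentation (upward closure) `aug S = {m | ∃ n ∈ S, n ≤ m}`. -/
noncomputable def augUtility {N L : Type*} [Fintype N] [PartialOrder N] [DecidableEq N]
    [DecidableRel ((· ≤ ·) : N → N → Prop)] [Fintype L]
    (A : L → Finset N) (d : L → ℕ) (β : ℝ) (p : L → ℝ) (S : Finset N) : ℝ :=
  letI aug : Finset N := Finset.univ.filter (fun m => ∃ n ∈ S, n ≤ m)
  ∑ l, p l * ((1 + β ^ 2) * ((aug ∩ A l).card : ℝ) /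
    ((aug.card : ℝ) + β ^ 2 * ((d l : ℝ) + 1)))

/-- The minimal elements of `S` have the same upward closure as `S`. -/
lemma aug_minimals {N : Type*} [Fintype N] [PartialOrder N] [DecidableEq N]
    [DecidableRel ((· ≤ ·) : N → N → Prop)] (S : Finset N) :
    (Finset.univ.filter (fun m =>
        ∃ n ∈ S.filter (fun n => ∀ x ∈ S, x ≤ n → x = n), n ≤ m)) =
      Finset.univ.filter (fun m => ∃ n ∈ S, n ≤ m) := by
  ext m
  simp only [Finset.mem_filter, Finset.mem_univ, true_and]
  constructor
  · rintro ⟨n, hn, hnm⟩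
    exact ⟨n, hn.1, hnm⟩
  · rintro ⟨n, hn, hnm⟩
    obtain ⟨n', hn', hmin⟩ := (S.filter (fun x => x ≤ n)).exists_minimal
      ⟨n, Finset.mem_filter.mpr ⟨hn, le_refl n⟩⟩
    rw [Finset.mem_filter] at hn'
    refine ⟨n', ⟨hn'.1, ?_⟩, hn'.2.trans hnm⟩
    intro x hx hxn'
    by_contra hne
    exact hne (le_antisymm hxn' (hmin (Finset.mem_filter.mpr ⟨hx, hxn'.trans hn'.2⟩) hxn'))

/-- The maximization of expected `hF_β` utility over all subsets of nodes can be
restricted to the antichains (sets of mutually exclusive nodes): both maxima agree. -/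
theorem max_over_antichains {N L : Type*} [Fintype N] [PartialOrder N] [DecidableEq N]
    [DecidableRel ((· ≤ ·) : N → N → Prop)] [Fintype L]
    (A : L → Finset N) (d : L → ℕ) (β : ℝ) (hβ : 0 < β)
    (p : L → ℝ) (hp : ∀ l, 0 ≤ p l) :
    sSup (Set.range (augUtility A d β p)) =
      sSup (augUtility A d β p ''
        {S : Finset N | IsAntichain (· ≤ ·) (S : Set N)}) := by
  congr 1
  apply Set.Subset.antisymm
  · rintro _ ⟨S, rfl⟩
    refine ⟨S.filter (fun n => ∀ x ∈ S, x ≤ n → x = n), ?_, ?_⟩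
    · intro a ha b hb hab hle
      simp only [Finset.coe_filter, Set.mem_setOf_eq] at ha hb
      exact hab (hb.2 a ha.1 hle)
    · unfold augUtility
      rw [aug_minimals]
  · rintro _ ⟨S, _, rfl⟩
    exact ⟨S, rfl⟩
end

section
/- Let V be a finite type carrying a rooted tree structure given by a root r ∈ V and a parent map π : V → V with π(r) = r and, for every v ∈ V, some k ∈ ℕ with π^[k](v) = r; let A(v) = {π^[k](v) : k ∈ ℕ}. Let L ⊆ V be a finite set of leaves, let p : L → ℝ satisfy p(l) ≥ 0 for all l and Σ_{l∈L} p(l) = 1, and for n ∈ V set P(n) = Σ_{l∈L, n∈A(l)} p(l). Let c be a real number with 0 ≤ c < 1, and let DL : V → L → ℝ satisfy, for every n ≠ r and every l ∈ L: DL(n,l) = DL(π(n),l) − (1−c) if n ∈ A(l), and DL(n,l) = DL(π(n),l) + (1+c) if n ∉ A(l). Suppose n* ∈ V satisfies P(n*) > (1+c)/2 and P(m) < (1+c)/2 for every m ≠ n* with n* ∈ A(m). Then for every m ∈ V with m ≠ n*, Σ_{l∈L} p(l)·DL(m,l) > Σ_{l∈L} p(l)·DL(n*,l); that is, n* is the unique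 minimizer of expected generalized tree-distance loss over all nodes. -/
open scoped Classical

/-- Optimal decision rule for the generalized tree-distance loss `DL_c`
(recovering Ramaswamy et al. 2015 for `c = 0` and Cao et al. 2024): the deepest node
whose probability exceeds `(1+c)/2` is the unique minimizer of the expected loss. -/
theorem generalized_tree_distance_optimal {V : Type*} [Fintype V] [DecidableEq V]
    (r : V) (π : V → V) (hr : π r = r) (hroot : ∀ v : V, ∃ k : ℕ, π^[k] v = r)
    (L : Finset V)
    (p : V → ℝ) (hp : ∀ l ∈ L, 0 ≤ p l) (hpsum : ∑ l ∈ L, p l = 1)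
    (c : ℝ) (hc0 : 0 ≤ c) (hc1 : c < 1)
    (DL : V → V → ℝ)
    (hDLin : ∀ n, n ≠ r → ∀ l ∈ L, (∃ k : ℕ, π^[k] l = n) →
      DL n l = DL (π n) l - (1 - c))
    (hDLout : ∀ n, n ≠ r → ∀ l ∈ L, (¬ ∃ k : ℕ, π^[k] l = n) →
      DL n l = DL (π n) l + (1 + c))
    (nstar : V)
    (hstar : (1 + c) / 2 < ∑ l ∈ L.filter (fun l => ∃ k : ℕ, π^[k] l = nstar), p l)
    (hdesc : ∀ m : V, m ≠ nstar → (∃ k : ℕ, π^[k] m = nstar) →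
      ∑ l ∈ L.filter (fun l => ∃ k : ℕ, π^[k] l = m), p l < (1 + c) / 2) :
    ∀ m : V, m ≠ nstar →
      ∑ l ∈ L, p l * DL nstar l < ∑ l ∈ L, p l * DL m l := by
  -- abbreviations via haves
  -- step recurrence
  have hstep : ∀ n, n ≠ r →
      ∑ l ∈ L, p l * DL n l
        = ∑ l ∈ L, p l * DL (π n) l
          + ((1 + c) - 2 * ∑ l ∈ L.filter (fun l => ∃ k : ℕ, π^[k] l = n), p l) := by
    intro n hn
    have h1 : ∀ l ∈ L.filter (fun l => ∃ k : ℕ, π^[k] l = n),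
        p l * DL n l = p l * DL (π n) l - (1 - c) * p l := by
      intro l hl
      rw [Finset.mem_filter] at hl
      rw [hDLin n hn l hl.1 hl.2]; ring
    have h2 : ∀ l ∈ L.filter (fun l => ¬ ∃ k : ℕ, π^[k] l = n),
        p l * DL n l = p l * DL (π n) l + (1 + c) * p l := by
      intro l hl
      rw [Finset.mem_filter] at hl
      rw [hDLout n hn l hl.1 hl.2]; ring
    have hsplit := Finset.sum_filter_add_sum_filter_not L
      (fun l => ∃ k : ℕ, π^[k] l = n) (fun l => p l * DL n l)
    have hsplit' := Finset.sum_filter_add_sum_filter_not L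
      (fun l => ∃ k : ℕ, π^[k] l = n) (fun l => p l * DL (π n) l)
    have hsplitp := Finset.sum_filter_add_sum_filter_not L
      (fun l => ∃ k : ℕ, π^[k] l = n) (fun l => p l)
    rw [Finset.sum_congr rfl h1, Finset.sum_congr rfl h2] at hsplit
    rw [Finset.sum_sub_distrib, Finset.sum_add_distrib, ← Finset.mul_sum,
      ← Finset.mul_sum] at hsplit
    rw [hpsum] at hsplitp
    linear_combination -hsplit + hsplit' + (1 + c) * hsplitp
  -- monotonicity of P along ancestors
  have hmono : ∀ a b : V, (∃ k : ℕ, π^[k] a = b) →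
      ∑ l ∈ L.filter (fun l => ∃ k : ℕ, π^[k] l = a), p l
        ≤ ∑ l ∈ L.filter (fun l => ∃ k : ℕ, π^[k] l = b), p l := by
    rintro a b ⟨k, hk⟩
    apply Finset.sum_le_sum_of_subset_of_nonneg
    · intro l hl
      rw [Finset.mem_filter] at hl ⊢
      obtain ⟨hlL, j, hj⟩ := hl
      exact ⟨hlL, k + j, by rw [Function.iterate_add_apply, hj, hk]⟩
    · intro l hl _
      exact hp l (Finset.mem_filter.mp hl).1
  -- incomparable nodes have small probability
  have hincomp : ∀ x : V, (¬ ∃ k : ℕ, π^[k] x = nstar) → (¬ ∃ k : ℕ, π^[k] nstar = x) →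
      ∑ l ∈ L.filter (fun l => ∃ k : ℕ, π^[k] l = x), p l
        ≤ 1 - ∑ l ∈ L.filter (fun l => ∃ k : ℕ, π^[k] l = nstar), p l := by
    intro x h1 h2
    have hdisj : Disjoint (L.filter (fun l => ∃ k : ℕ, π^[k] l = x))
        (L.filter (fun l => ∃ k : ℕ, π^[k] l = nstar)) := by
      rw [Finset.disjoint_left]
      rintro l hl hl'
      obtain ⟨-, i, hi⟩ := Finset.mem_filter.mp hl
      obtain ⟨-, j, hj⟩ := Finset.mem_filter.mp hl'
      rcases le_total i j with hij | hij
      · exact h1 ⟨j - i, by rw [← hi, ← Function.iterate_add_apply,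
          Nat.sub_add_cancel hij, hj]⟩
      · exact h2 ⟨i - j, by rw [← hj, ← Function.iterate_add_apply,
          Nat.sub_add_cancel hij, hi]⟩
    have hsub : (L.filter (fun l => ∃ k : ℕ, π^[k] l = x))
        ∪ (L.filter (fun l => ∃ k : ℕ, π^[k] l = nstar)) ⊆ L := by
      intro l hl
      rcases Finset.mem_union.mp hl with h | h
      · exact (Finset.mem_filter.mp h).1
      · exact (Finset.mem_filter.mp h).1
    have := Finset.sum_le_sum_of_subset_of_nonneg hsub
      (fun l hl _ => hp l hl)
    rw [Finset.sum_union hdisj, hpsum] at this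
    linarith
  -- going down from any proper ancestor of nstar strictly decreases the loss
  have hdown : ∀ k : ℕ, π^[k] nstar = nstar ∨
      ∑ l ∈ L, p l * DL nstar l < ∑ l ∈ L, p l * DL (π^[k] nstar) l := by
    intro k
    induction k with
    | zero => left; rfl
    | succ k ih =>
      by_cases ha : π (π^[k] nstar) = π^[k] nstar
      · rw [Function.iterate_succ_apply', ha]; exact ih
      · have hne : π^[k] nstar ≠ r := fun h => ha (by rw [h, hr])
        have hPa := hmono nstar (π^[k] nstar) ⟨k, rfl⟩
        have hEa := hstep (π^[k] nstar) hne
        rw [Function.iterate_succ_apply']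
        rcases ih with h | h
        · right; rw [h] at hEa hPa ⊢; linarith
        · right; linarith
  -- proper descendants of nstar have strictly larger loss
  have hup : ∀ k : ℕ, ∀ m : V, π^[k] m = nstar → m = nstar ∨
      ∑ l ∈ L, p l * DL nstar l < ∑ l ∈ L, p l * DL m l := by
    intro k
    induction k with
    | zero => intro m hm; left; exact hm
    | succ k ih =>
      intro m hm
      by_cases hmn : m = nstar
      · left; exact hmn
      · right
        have hmr : m ≠ r := by
          intro h
          apply hmn
          rw [← hm, h, Function.iterate_fixed hr]
        have hPm := hdesc m hmn ⟨k + 1, hm⟩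
        have hEm := hstep m hmr
        rw [Function.iterate_succ_apply] at hm
        rcases ih (π m) hm with h | h
        · rw [h] at hEm; linarith
        · linarith
  -- main argument
  intro m hm
  by_cases hdescm : ∃ k : ℕ, π^[k] m = nstar
  · obtain ⟨k, hk⟩ := hdescm
    rcases hup k m hk with h | h
    · exact absurd h hm
    · exact h
  · -- m is not a descendant of nstar
    obtain ⟨K, hK⟩ := hroot m
    clear hm
    induction K generalizing m with
    | zero =>
      -- m = r, which is an ancestor of nstar
      have hmr : m = r := hK
      subst hmr
      obtain ⟨j, hj⟩ := hroot nstar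
      rcases hdown j with h | h
      · exact absurd ⟨0, hj.symm.trans h⟩ hdescm
      · rwa [hj] at h
    | succ K ih =>
      by_cases hanc : ∃ j : ℕ, π^[j] nstar = m
      · obtain ⟨j, hj⟩ := hanc
        rcases hdown j with h | h
        · exact absurd ⟨0, hj.symm.trans h⟩ hdescm
        · rwa [hj] at h
      · have hmr : m ≠ r := by
          intro h; subst h
          obtain ⟨j, hj⟩ := hroot nstar
          exact hanc ⟨j, hj⟩
        have hPm : ∑ l ∈ L.filter (fun l => ∃ k : ℕ, π^[k] l = m), p l
            < (1 + c) / 2 := by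
          have := hincomp m hdescm hanc
          linarith
        have hEm := hstep m hmr
        have hnext : ¬ ∃ k : ℕ, π^[k] (π m) = nstar := by
          rintro ⟨k, hk⟩
          exact hdescm ⟨k + 1, by rw [Function.iterate_succ_apply]; exact hk⟩
        rw [Function.iterate_succ_apply] at hK
        have := ih (π m) hnext hK
        linarith
end
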